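/- arXiv:1503.03357 — 3 statements merged into one kernel-verified Lean document; each statement's English description precedes it below -/
import Mathlib

section
/- Fix an integer r ≥ 1 and c ∈ [0,1]. Then there exists a constant K such that for all n, |Σ_{i odd, 0 ≤ i ≤ r} C(⌊cn⌋, r−i)·C(n−⌊cn⌋, i) − n^r/(2r!)·(1−(2c−1)^r)| ≤ K·n^(r−1). -/
open Finset

private lemma desc_bound (k a : ℕ) :
    |((a.descFactorial k : ℕ) : ℝ) - (a:ℝ)^k| ≤ (k:ℝ)^2 * (a:ℝ)^(k-1) := by
  induction k with
  | zero => simp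
  | succ k ih =>
    have ha0 : (0:ℝ) ≤ (a:ℝ) := Nat.cast_nonneg a
    have hexp : (k+1) - 1 = k := by omega
    rw [hexp]
    by_cases h : a ≤ k
    · rw [Nat.descFactorial_eq_zero_iff_lt.2 (Nat.lt_succ_of_le h)]
      have hak : (a:ℝ) ≤ (k:ℝ) := by exact_mod_cast h
      have : |((0:ℕ):ℝ) - (a:ℝ)^(k+1)| = (a:ℝ)^(k+1) := by
        rw [Nat.cast_zero, zero_sub, abs_neg, abs_of_nonneg (pow_nonneg ha0 _)]
      rw [this]
      push_cast
      calc (a:ℝ)^(k+1) = (a:ℝ)^k * a := by ring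
        _ ≤ ((k:ℝ)+1)^2 * (a:ℝ)^k := by nlinarith [pow_nonneg ha0 k]
    · push_neg at h
      have hka : (k:ℝ) < (a:ℝ) := by exact_mod_cast h
      have hsub : ((a - k : ℕ) : ℝ) = (a:ℝ) - k := by
        rw [Nat.cast_sub h.le]
      rw [Nat.descFactorial_succ, Nat.cast_mul, hsub]
      set D := ((a.descFactorial k : ℕ) : ℝ) with hD
      have key : ((a:ℝ) - k) * D - (a:ℝ)^(k+1)
          = ((a:ℝ) - k) * (D - (a:ℝ)^k) - (k:ℝ) * (a:ℝ)^k := by ring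
      have h1 : |((a:ℝ)-k) * (D - (a:ℝ)^k)| ≤ (a:ℝ) * ((k:ℝ)^2 * (a:ℝ)^(k-1)) := by
        rw [abs_mul, abs_of_nonneg (by linarith : (0:ℝ) ≤ (a:ℝ) - k)]
        apply mul_le_mul (by linarith) ih (abs_nonneg _) ha0
      have h2 : (a:ℝ) * ((k:ℝ)^2 * (a:ℝ)^(k-1)) ≤ (k:ℝ)^2 * (a:ℝ)^k := by
        rcases Nat.eq_zero_or_pos k with hk | hk
        · subst hk; simp
        · have he : (a:ℝ) * (a:ℝ)^(k-1) = (a:ℝ)^k := by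
            rw [← pow_succ']
            congr 1
            omega
          rw [show (a:ℝ) * ((k:ℝ)^2 * (a:ℝ)^(k-1)) = (k:ℝ)^2 * ((a:ℝ) * (a:ℝ)^(k-1)) from by ring, he]

      have h3 : |(k:ℝ) * (a:ℝ)^k| = (k:ℝ) * (a:ℝ)^k := by
        rw [abs_of_nonneg]; positivity
      calc |((a:ℝ) - k) * D - (a:ℝ)^(k+1)|
          ≤ |((a:ℝ)-k) * (D - (a:ℝ)^k)| + |(k:ℝ) * (a:ℝ)^k| := by
            rw [key]; exact abs_sub _ _
        _ ≤ (k:ℝ)^2 * (a:ℝ)^k + (k:ℝ) * (a:ℝ)^k := by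
            rw [h3]; exact add_le_add (h1.trans h2) le_rfl
        _ ≤ ((k:ℝ)+1)^2 * (a:ℝ)^k := by nlinarith [pow_nonneg ha0 k, Nat.cast_nonneg (α := ℝ) k]
        _ = (((k:ℕ)+1 : ℕ):ℝ)^2 * (a:ℝ)^k := by push_cast; ring

private lemma choose_bound (k a : ℕ) :
    |((a.choose k : ℕ) : ℝ) - (a:ℝ)^k / (k.factorial : ℝ)| ≤ (k:ℝ)^2 * (a:ℝ)^(k-1) := by
  have hf : (1:ℝ) ≤ (k.factorial : ℝ) := by exact_mod_cast Nat.one_le_iff_ne_zero.2 k.factorial_ne_zero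
  have hf0 : (0:ℝ) < (k.factorial : ℝ) := by linarith
  have hd : ((a.descFactorial k : ℕ) : ℝ) = (k.factorial : ℝ) * (a.choose k : ℝ) := by
    exact_mod_cast congrArg (Nat.cast : ℕ → ℝ) (Nat.descFactorial_eq_factorial_mul_choose a k)
  have heq : (a.choose k : ℝ) - (a:ℝ)^k / (k.factorial : ℝ)
      = (((a.descFactorial k : ℕ) : ℝ) - (a:ℝ)^k) / (k.factorial : ℝ) := by
    rw [hd]; field_simp
  rw [heq, abs_div, abs_of_pos hf0]
  calc |((a.descFactorial k : ℕ) : ℝ) - (a:ℝ)^k| / (k.factorial : ℝ)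
      ≤ |((a.descFactorial k : ℕ) : ℝ) - (a:ℝ)^k| := div_le_self (abs_nonneg _) hf
    _ ≤ (k:ℝ)^2 * (a:ℝ)^(k-1) := desc_bound k a

private lemma choose_le_pow' (k a : ℕ) : ((a.choose k : ℕ) : ℝ) ≤ (a:ℝ)^k := by
  have h : a.choose k ≤ a ^ k := by
    calc a.choose k ≤ k.factorial * a.choose k := Nat.le_mul_of_pos_left _ k.factorial_pos
      _ = a.descFactorial k := (Nat.descFactorial_eq_factorial_mul_choose a k).symm
      _ ≤ a ^ k := Nat.descFactorial_le_pow a k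
  exact_mod_cast h

theorem stmt_3 (r : ℕ) (hr : 1 ≤ r) (c : ℝ) (hc0 : 0 ≤ c) (hc1 : c ≤ 1) :
    ∃ K : ℝ, ∀ n : ℕ,
      |(∑ i ∈ Finset.range (r + 1), if Odd i then
          ((Nat.choose ⌊c * n⌋₊ (r - i) : ℝ) * (Nat.choose (n - ⌊c * n⌋₊) i : ℝ)) else 0)
        - (n : ℝ) ^ r / (2 * (Nat.factorial r : ℝ)) * (1 - (2 * c - 1) ^ r)|
      ≤ K * (n : ℝ) ^ (r - 1) := by
  classical
  refine ⟨((r:ℝ)+1) * (2*(r:ℝ)^2) + r, fun n => ?_⟩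
  have hK0 : (0:ℝ) ≤ ((r:ℝ)+1) * (2*(r:ℝ)^2) + r := by positivity
  rcases Nat.eq_zero_or_pos n with hn | hn
  · subst hn
    have h0 : ⌊c * ((0:ℕ):ℝ)⌋₊ = 0 := by simp
    have hsum : (∑ i ∈ Finset.range (r + 1), if Odd i then
          ((Nat.choose ⌊c * (0:ℕ)⌋₊ (r - i) : ℝ) * (Nat.choose ((0:ℕ) - ⌊c * (0:ℕ)⌋₊) i : ℝ)) else 0) = 0 := by
      apply Finset.sum_eq_zero
      intro i _
      split
      · rename_i hodd
        have : Nat.choose ((0:ℕ) - ⌊c * (0:ℕ)⌋₊) i = 0 := by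
          rw [h0]
          exact Nat.choose_eq_zero_of_lt hodd.pos
        rw [this]
        simp
      · rfl
    rw [hsum]
    have : ((0:ℕ):ℝ)^r = 0 := by
      rw [Nat.cast_zero]; exact zero_pow (by omega)
    rw [this]
    simp only [zero_sub, zero_div, zero_mul, abs_neg, abs_zero, sub_zero, neg_zero]
    positivity
  · -- main case n ≥ 1
    have hn1 : (1:ℝ) ≤ (n:ℝ) := by exact_mod_cast hn
    have hn0 : (0:ℝ) ≤ (n:ℝ) := Nat.cast_nonneg n
    set m : ℕ := ⌊c * (n:ℝ)⌋₊ with hmdef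
    set p : ℕ := n - m with hpdef
    have hcn0 : (0:ℝ) ≤ c * n := mul_nonneg hc0 hn0
    have hmle : (m:ℝ) ≤ c * n := Nat.floor_le hcn0
    have hmgt : c * n < (m:ℝ) + 1 := Nat.lt_floor_add_one _
    have hcnn : c * n ≤ (n:ℝ) := by nlinarith
    have hmn : m ≤ n := by
      have h := Nat.floor_le_floor hcnn
      rwa [Nat.floor_natCast] at h
    have hx0 : (0:ℝ) ≤ (m:ℝ) := Nat.cast_nonneg m
    have hxn : (m:ℝ) ≤ (n:ℝ) := by exact_mod_cast hmn
    have hyval : (p:ℝ) = (n:ℝ) - (m:ℝ) := by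
      rw [hpdef, Nat.cast_sub hmn]
    have hy0 : (0:ℝ) ≤ (p:ℝ) := Nat.cast_nonneg p
    have hyn : (p:ℝ) ≤ (n:ℝ) := by rw [hyval]; linarith
    set g : ℕ → ℝ := fun i => if Odd i then
        (m:ℝ)^(r-i) * (p:ℝ)^i / (((r-i).factorial : ℝ) * ((i.factorial : ℕ) : ℝ)) else 0 with hg
    -- Step A: termwise approximation
    have stepA : |(∑ i ∈ Finset.range (r+1), if Odd i then
          ((Nat.choose m (r-i) : ℝ) * (Nat.choose p i : ℝ)) else 0)
          - ∑ i ∈ Finset.range (r+1), g i|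
        ≤ ((r:ℝ)+1) * (2*(r:ℝ)^2) * (n:ℝ)^(r-1) := by
      rw [← Finset.sum_sub_distrib]
      refine (Finset.abs_sum_le_sum_abs _ _).trans ?_
      have hterm : ∀ i ∈ Finset.range (r+1),
          |(if Odd i then ((Nat.choose m (r-i) : ℝ) * (Nat.choose p i : ℝ)) else 0) - g i|
            ≤ 2*(r:ℝ)^2 * (n:ℝ)^(r-1) := by
        intro i hi
        rw [Finset.mem_range] at hi
        by_cases hodd : Odd i
        · have hi1 : 1 ≤ i := hodd.pos
          have hir : i ≤ r := by omega
          simp only [hg, if_pos hodd]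
          have hfj : (1:ℝ) ≤ (((r-i).factorial : ℕ):ℝ) := by
            exact_mod_cast Nat.one_le_iff_ne_zero.2 (r-i).factorial_ne_zero
          have hfi : (1:ℝ) ≤ ((i.factorial : ℕ):ℝ) := by
            exact_mod_cast Nat.one_le_iff_ne_zero.2 i.factorial_ne_zero
          have key : (Nat.choose m (r-i) : ℝ) * (Nat.choose p i : ℝ)
              - (m:ℝ)^(r-i) * (p:ℝ)^i / ((((r-i).factorial : ℕ):ℝ) * ((i.factorial : ℕ):ℝ))
              = ((Nat.choose m (r-i) : ℝ) - (m:ℝ)^(r-i) / (((r-i).factorial : ℕ):ℝ)) * (Nat.choose p i : ℝ)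
                + ((m:ℝ)^(r-i) / (((r-i).factorial : ℕ):ℝ))
                  * ((Nat.choose p i : ℝ) - (p:ℝ)^i / ((i.factorial : ℕ):ℝ)) := by
            field_simp
            ring
          rw [key]
          have b1 : |((Nat.choose m (r-i) : ℝ) - (m:ℝ)^(r-i) / (((r-i).factorial : ℕ):ℝ)) * (Nat.choose p i : ℝ)|
              ≤ (((r-i:ℕ):ℝ)^2 * (m:ℝ)^(r-i-1)) * (p:ℝ)^i := by
            rw [abs_mul]
            apply mul_le_mul (choose_bound (r-i) m) _ (abs_nonneg _) (by positivity)
            rw [abs_of_nonneg (Nat.cast_nonneg _)]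
            exact choose_le_pow' i p
          have b2 : |((m:ℝ)^(r-i) / (((r-i).factorial : ℕ):ℝ))
                * ((Nat.choose p i : ℝ) - (p:ℝ)^i / ((i.factorial : ℕ):ℝ))|
              ≤ (m:ℝ)^(r-i) * ((i:ℝ)^2 * (p:ℝ)^(i-1)) := by
            rw [abs_mul]
            apply mul_le_mul _ (choose_bound i p) (abs_nonneg _) (by positivity)
            rw [abs_of_nonneg (by positivity)]
            exact div_le_self (by positivity) hfj
          have c1 : (((r-i:ℕ):ℝ)^2 * (m:ℝ)^(r-i-1)) * (p:ℝ)^i ≤ ((r-i:ℕ):ℝ)^2 * (n:ℝ)^(r-1) := by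
            rcases Nat.eq_zero_or_pos (r-i) with hj0 | hj0
            · rw [hj0]
              push_cast
              simp
            · have hmm : (m:ℝ)^(r-i-1) * (p:ℝ)^i ≤ (n:ℝ)^(r-i-1) * (n:ℝ)^i :=
                mul_le_mul (pow_le_pow_left₀ hx0 hxn _) (pow_le_pow_left₀ hy0 hyn _)
                  (by positivity) (by positivity)
              have hee : (n:ℝ)^(r-i-1) * (n:ℝ)^i = (n:ℝ)^(r-1) := by
                rw [← pow_add]; congr 1; omega
              calc (((r-i:ℕ):ℝ)^2 * (m:ℝ)^(r-i-1)) * (p:ℝ)^i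
                  = ((r-i:ℕ):ℝ)^2 * ((m:ℝ)^(r-i-1) * (p:ℝ)^i) := by ring
                _ ≤ ((r-i:ℕ):ℝ)^2 * ((n:ℝ)^(r-i-1) * (n:ℝ)^i) := by
                    apply mul_le_mul_of_nonneg_left hmm (by positivity)
                _ = ((r-i:ℕ):ℝ)^2 * (n:ℝ)^(r-1) := by rw [hee]
          have c2 : (m:ℝ)^(r-i) * ((i:ℝ)^2 * (p:ℝ)^(i-1)) ≤ (i:ℝ)^2 * (n:ℝ)^(r-1) := by
            have hmm : (m:ℝ)^(r-i) * (p:ℝ)^(i-1) ≤ (n:ℝ)^(r-i) * (n:ℝ)^(i-1) :=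
              mul_le_mul (pow_le_pow_left₀ hx0 hxn _) (pow_le_pow_left₀ hy0 hyn _)
                (by positivity) (by positivity)
            have hee : (n:ℝ)^(r-i) * (n:ℝ)^(i-1) = (n:ℝ)^(r-1) := by
              rw [← pow_add]; congr 1; omega
            calc (m:ℝ)^(r-i) * ((i:ℝ)^2 * (p:ℝ)^(i-1))
                = (i:ℝ)^2 * ((m:ℝ)^(r-i) * (p:ℝ)^(i-1)) := by ring
              _ ≤ (i:ℝ)^2 * ((n:ℝ)^(r-i) * (n:ℝ)^(i-1)) := by
                  apply mul_le_mul_of_nonneg_left hmm (by positivity)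
              _ = (i:ℝ)^2 * (n:ℝ)^(r-1) := by rw [hee]
          have hjr : ((r-i:ℕ):ℝ) ≤ (r:ℝ) := by exact_mod_cast Nat.sub_le r i
          have hirr : (i:ℝ) ≤ (r:ℝ) := by exact_mod_cast hir
          have hnr0 : (0:ℝ) ≤ (n:ℝ)^(r-1) := by positivity
          have hji0 : (0:ℝ) ≤ ((r-i:ℕ):ℝ) := Nat.cast_nonneg _
          have hii0 : (0:ℝ) ≤ (i:ℝ) := Nat.cast_nonneg _
          calc |((Nat.choose m (r-i) : ℝ) - (m:ℝ)^(r-i) / (((r-i).factorial : ℕ):ℝ)) * (Nat.choose p i : ℝ)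
                + ((m:ℝ)^(r-i) / (((r-i).factorial : ℕ):ℝ))
                  * ((Nat.choose p i : ℝ) - (p:ℝ)^i / ((i.factorial : ℕ):ℝ))|
              ≤ (((r-i:ℕ):ℝ)^2 * (m:ℝ)^(r-i-1)) * (p:ℝ)^i
                + (m:ℝ)^(r-i) * ((i:ℝ)^2 * (p:ℝ)^(i-1)) := (abs_add_le _ _).trans (add_le_add b1 b2)
            _ ≤ ((r-i:ℕ):ℝ)^2 * (n:ℝ)^(r-1) + (i:ℝ)^2 * (n:ℝ)^(r-1) := add_le_add c1 c2
            _ ≤ 2*(r:ℝ)^2 * (n:ℝ)^(r-1) := by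
                have q1 : ((r-i:ℕ):ℝ)^2 ≤ (r:ℝ)^2 := pow_le_pow_left₀ hji0 hjr 2
                have q2 : ((i:ℕ):ℝ)^2 ≤ (r:ℝ)^2 := pow_le_pow_left₀ hii0 hirr 2
                have := mul_le_mul_of_nonneg_right q1 hnr0
                have := mul_le_mul_of_nonneg_right q2 hnr0
                linarith
        · simp only [hg, if_neg hodd]
          simpa using (by positivity : (0:ℝ) ≤ 2*(r:ℝ)^2 * (n:ℝ)^(r-1))
      refine (Finset.sum_le_sum hterm).trans ?_
      rw [Finset.sum_const, Finset.card_range, nsmul_eq_mul]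
      apply le_of_eq
      push_cast
      ring
    -- Step B: closed form of the approximating sum
    have hfr1 : (1:ℝ) ≤ (r.factorial : ℝ) := by
      exact_mod_cast Nat.one_le_iff_ne_zero.2 r.factorial_ne_zero
    have hfr0 : (0:ℝ) < (r.factorial : ℝ) := by linarith
    have hsum_g : ∑ i ∈ Finset.range (r+1), g i
        = ((n:ℝ)^r - ((m:ℝ) - (p:ℝ))^r) / (2 * (r.factorial : ℝ)) := by
      have hxy : (p:ℝ) + (m:ℝ) = (n:ℝ) := by rw [hyval]; ring
      have e1 : ((p:ℝ) + (m:ℝ))^r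
          = ∑ i ∈ Finset.range (r+1), (p:ℝ)^i * (m:ℝ)^(r-i) * (r.choose i : ℝ) := add_pow _ _ r
      have e2 : ((m:ℝ) - (p:ℝ))^r
          = ∑ i ∈ Finset.range (r+1), (-(p:ℝ))^i * (m:ℝ)^(r-i) * (r.choose i : ℝ) := by
        rw [show (m:ℝ) - (p:ℝ) = (-(p:ℝ)) + (m:ℝ) from by ring]
        exact add_pow _ _ r
      rw [← hxy, e1, e2, ← Finset.sum_sub_distrib, eq_div_iff (by positivity), Finset.sum_mul]
      apply Finset.sum_congr rfl
      intro i hi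
      rw [Finset.mem_range] at hi
      have hir : i ≤ r := by omega
      have hCfact : ((r.choose i : ℕ):ℝ) * ((i.factorial : ℕ):ℝ) * (((r-i).factorial : ℕ):ℝ)
          = (r.factorial : ℝ) := by
        exact_mod_cast congrArg (Nat.cast : ℕ → ℝ) (Nat.choose_mul_factorial_mul_factorial hir)
      by_cases hodd : Odd i
      · simp only [hg, if_pos hodd]
        have hneg : (-(p:ℝ))^i = -((p:ℝ)^i) := hodd.neg_pow _
        rw [hneg]
        have hj1 : (((r-i).factorial : ℕ):ℝ) ≠ 0 := by positivity
        have hi1 : ((i.factorial : ℕ):ℝ) ≠ 0 := by positivity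
        field_simp
        linear_combination (-2 * (m:ℝ)^(r-i) * (p:ℝ)^i) * hCfact
      · simp only [hg, if_neg hodd]
        rw [Nat.not_odd_iff_even] at hodd
        rw [hodd.neg_pow]
        ring
    -- Step C: the power difference
    have hw : |(m:ℝ) - (p:ℝ)| ≤ (n:ℝ) := by
      rw [hyval, abs_le]; constructor <;> linarith
    have hv : |(2*c-1) * (n:ℝ)| ≤ (n:ℝ) := by
      rw [abs_mul, abs_of_nonneg hn0]
      have h1 : |2*c-1| ≤ 1 := abs_le.2 ⟨by linarith, by linarith⟩
      calc |2*c-1| * (n:ℝ) ≤ 1 * (n:ℝ) := mul_le_mul_of_nonneg_right h1 hn0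
        _ = (n:ℝ) := one_mul _
    have hwv : |((m:ℝ) - (p:ℝ)) - (2*c-1)*(n:ℝ)| ≤ 2 := by
      rw [hyval]
      rw [show ((m:ℝ) - ((n:ℝ)-(m:ℝ))) - (2*c-1)*(n:ℝ) = 2*((m:ℝ) - c*(n:ℝ)) from by ring]
      rw [abs_le]
      constructor <;> linarith
    have hpow : |((m:ℝ)-(p:ℝ))^r - ((2*c-1)*(n:ℝ))^r| ≤ 2 * (r:ℝ) * (n:ℝ)^(r-1) := by
      have hgeom := geom_sum₂_mul ((m:ℝ)-(p:ℝ)) ((2*c-1)*(n:ℝ)) r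
      rw [← hgeom, abs_mul]
      have hs : |∑ i ∈ Finset.range r, ((m:ℝ)-(p:ℝ))^i * ((2*c-1)*(n:ℝ))^(r-1-i)|
          ≤ (r:ℝ) * (n:ℝ)^(r-1) := by
        refine (Finset.abs_sum_le_sum_abs _ _).trans ?_
        have hterm : ∀ i ∈ Finset.range r,
            |((m:ℝ)-(p:ℝ))^i * ((2*c-1)*(n:ℝ))^(r-1-i)| ≤ (n:ℝ)^(r-1) := by
          intro i hi
          rw [Finset.mem_range] at hi
          rw [abs_mul, abs_pow, abs_pow]
          calc |(m:ℝ)-(p:ℝ)|^i * |(2*c-1)*(n:ℝ)|^(r-1-i)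
              ≤ (n:ℝ)^i * (n:ℝ)^(r-1-i) :=
                mul_le_mul (pow_le_pow_left₀ (abs_nonneg _) hw _)
                  (pow_le_pow_left₀ (abs_nonneg _) hv _) (by positivity) (by positivity)
            _ = (n:ℝ)^(r-1) := by rw [← pow_add]; congr 1; omega
        refine (Finset.sum_le_sum hterm).trans ?_
        rw [Finset.sum_const, Finset.card_range, nsmul_eq_mul]
      calc |∑ i ∈ Finset.range r, ((m:ℝ)-(p:ℝ))^i * ((2*c-1)*(n:ℝ))^(r-1-i)|
            * |((m:ℝ)-(p:ℝ)) - (2*c-1)*(n:ℝ)|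
          ≤ ((r:ℝ) * (n:ℝ)^(r-1)) * 2 :=
            mul_le_mul hs hwv (abs_nonneg _) (by positivity)
        _ = 2 * (r:ℝ) * (n:ℝ)^(r-1) := by ring
    have stepC : |(((n:ℝ)^r - ((m:ℝ)-(p:ℝ))^r) / (2 * (r.factorial:ℝ)))
          - (n:ℝ)^r / (2 * (r.factorial:ℝ)) * (1 - (2*c-1)^r)|
        ≤ (r:ℝ) * (n:ℝ)^(r-1) := by
      have heq : (((n:ℝ)^r - ((m:ℝ)-(p:ℝ))^r) / (2 * (r.factorial:ℝ)))
          - (n:ℝ)^r / (2 * (r.factorial:ℝ)) * (1 - (2*c-1)^r)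
          = (((2*c-1)*(n:ℝ))^r - ((m:ℝ)-(p:ℝ))^r) / (2 * (r.factorial:ℝ)) := by
        rw [mul_pow]
        field_simp
        ring
      rw [heq, abs_div, abs_of_pos (by linarith : (0:ℝ) < 2 * (r.factorial:ℝ))]
      have h1 : |((2*c-1)*(n:ℝ))^r - ((m:ℝ)-(p:ℝ))^r| ≤ 2 * (r:ℝ) * (n:ℝ)^(r-1) := by
        rw [abs_sub_comm]; exact hpow
      calc |((2*c-1)*(n:ℝ))^r - ((m:ℝ)-(p:ℝ))^r| / (2 * (r.factorial:ℝ))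
          ≤ |((2*c-1)*(n:ℝ))^r - ((m:ℝ)-(p:ℝ))^r| / 2 :=
            div_le_div_of_nonneg_left (abs_nonneg _) two_pos (by linarith)
        _ ≤ (2 * (r:ℝ) * (n:ℝ)^(r-1)) / 2 := (div_le_div_iff_of_pos_right two_pos).2 h1
        _ = (r:ℝ) * (n:ℝ)^(r-1) := by ring
    -- combine
    have hfinal := (abs_add_le ((∑ i ∈ Finset.range (r+1), if Odd i then
          ((Nat.choose m (r-i) : ℝ) * (Nat.choose p i : ℝ)) else 0)
          - ∑ i ∈ Finset.range (r+1), g i)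
        ((∑ i ∈ Finset.range (r+1), g i)
          - (n:ℝ)^r / (2 * (r.factorial:ℝ)) * (1 - (2*c-1)^r)))
    rw [sub_add_sub_cancel] at hfinal
    have hC' : |(∑ i ∈ Finset.range (r+1), g i)
          - (n:ℝ)^r / (2 * (r.factorial:ℝ)) * (1 - (2*c-1)^r)| ≤ (r:ℝ) * (n:ℝ)^(r-1) := by
      rw [hsum_g]; exact stepC
    calc |(∑ i ∈ Finset.range (r+1), if Odd i then
          ((Nat.choose m (r-i) : ℝ) * (Nat.choose p i : ℝ)) else 0)
          - (n:ℝ)^r / (2 * (r.factorial:ℝ)) * (1 - (2*c-1)^r)|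
        ≤ ((r:ℝ)+1) * (2*(r:ℝ)^2) * (n:ℝ)^(r-1) + (r:ℝ) * (n:ℝ)^(r-1) :=
          hfinal.trans (add_le_add stepA hC')
      _ = (((r:ℝ)+1) * (2*(r:ℝ)^2) + (r:ℝ)) * (n:ℝ)^(r-1) := by ring
end

section
/- Let H be a k-uniform hypergraph on n vertices with at least γ·n^k/k edges and suppose x, y ∈ V(H) satisfy |N_H(x) ∩ N_H(y)| ≥ γ·n^(k−1). Then, for n sufficiently large and 0 < γ' ≪ γ ≪ 1/k, there are at least γ'·n^(2k−1) sets X ⊆ V(H) of size 2k−1 such that both H[X ∪ {x}] and H[X ∪ {y}] contain perfect matchings. -/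
open scoped Classical

/-- The link of vertex `v` in the hypergraph with edge set `E`: the family of
`(k-1)`-sets forming an edge together with `v`. -/
def link {V : Type*} [Fintype V] [DecidableEq V] (E : Finset (Finset V)) (k : ℕ) (v : V) :
    Finset (Finset V) :=
  (Finset.univ : Finset (Finset V)).filter
    (fun S => S.card = k - 1 ∧ v ∉ S ∧ insert v S ∈ E)

/-- `M` is a perfect matching of the subhypergraph of the hypergraph with edge
set `E` induced on `W`. -/
def IsPMOn {V : Type*} [DecidableEq V] (E : Finset (Finset V)) (W : Finset V)
    (M : Finset (Finset V)) : Prop :=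
  (∀ e ∈ M, e ∈ E ∧ e ⊆ W) ∧ (∀ e ∈ M, ∀ f ∈ M, e ≠ f → Disjoint e f) ∧
    (∀ v ∈ W, ∃ e ∈ M, v ∈ e)

section Helpers
variable {V : Type} [Fintype V] [DecidableEq V] {k : ℕ}

lemma edges_containing_le (E : Finset (Finset V)) (hE : ∀ e ∈ E, e.card = k) (v : V) :
    (E.filter (fun e => v ∈ e)).card ≤ (Fintype.card V) ^ (k - 1) := by
  calc (E.filter (fun e => v ∈ e)).card
      ≤ ((Finset.univ : Finset V).powersetCard (k - 1)).card := by
        apply Finset.card_le_card_of_injOn (fun e => e.erase v)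
        · intro e he
          rw [Finset.mem_coe, Finset.mem_filter] at he
          rw [Finset.mem_coe, Finset.mem_powersetCard]
          exact ⟨Finset.subset_univ _, by rw [Finset.card_erase_of_mem he.2, hE e he.1]⟩
        · intro e he f hf hef
          simp only [Finset.coe_filter, Set.mem_setOf_eq] at he hf
          have := congrArg (insert v) hef
          rwa [Finset.insert_erase he.2, Finset.insert_erase hf.2] at this
    _ = (Fintype.card V).choose (k - 1) := by
        rw [Finset.card_powersetCard, Finset.card_univ]
    _ ≤ (Fintype.card V) ^ (k - 1) := Nat.choose_le_pow _ _

lemma edges_meeting_le (E : Finset (Finset V)) (hE : ∀ e ∈ E, e.card = k) (A : Finset V) :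
    (E.filter (fun e => ¬ Disjoint e A)).card ≤ A.card * (Fintype.card V) ^ (k - 1) := by
  have hsub : E.filter (fun e => ¬ Disjoint e A) ⊆
      A.biUnion (fun v => E.filter (fun e => v ∈ e)) := by
    intro e he
    rw [Finset.mem_filter] at he
    obtain ⟨he, hnd⟩ := he
    rw [Finset.not_disjoint_iff] at hnd
    obtain ⟨v, hv, hvA⟩ := hnd
    exact Finset.mem_biUnion.2 ⟨v, hvA, Finset.mem_filter.2 ⟨he, hv⟩⟩
  exact (Finset.card_le_card hsub).trans
    (Finset.card_biUnion_le_card_mul _ _ _ fun v _ => edges_containing_le E hE v)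

lemma pm_exists {E : Finset (Finset V)} {S e : Finset V} {v : V}
    (hvS : v ∉ S) (hSE : insert v S ∈ E) (heE : e ∈ E)
    (hd : Disjoint e (insert v S)) :
    ∃ M, IsPMOn E (insert v (S ∪ e)) M := by
  refine ⟨{insert v S, e}, ?_, ?_, ?_⟩
  · intro f hf
    rcases Finset.mem_insert.1 hf with rfl | hf
    · refine ⟨hSE, fun a ha => ?_⟩
      rcases Finset.mem_insert.1 ha with rfl | h
      · exact Finset.mem_insert_self _ _
      · exact Finset.mem_insert_of_mem (Finset.mem_union_left _ h)
    · rw [Finset.mem_singleton] at hf; subst hf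
      exact ⟨heE, fun a ha => Finset.mem_insert_of_mem (Finset.mem_union_right _ ha)⟩
  · intro a ha b hb hab
    rcases Finset.mem_insert.1 ha with rfl | ha
    · rcases Finset.mem_insert.1 hb with rfl | hb
      · exact absurd rfl hab
      · rw [Finset.mem_singleton] at hb; subst hb; exact hd.symm
    · rw [Finset.mem_singleton] at ha; subst ha
      rcases Finset.mem_insert.1 hb with rfl | hb
      · exact hd
      · rw [Finset.mem_singleton] at hb; subst hb; exact absurd rfl hab
  · intro a ha
    rcases Finset.mem_insert.1 ha with rfl | ha
    · exact ⟨insert a S, Finset.mem_insert_self _ _, Finset.mem_insert_self _ _⟩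
    · rcases Finset.mem_union.1 ha with h | h
      · exact ⟨insert v S, Finset.mem_insert_self _ _, Finset.mem_insert_of_mem h⟩
      · exact ⟨e, Finset.mem_insert_of_mem (Finset.mem_singleton_self _), h⟩

end Helpers

theorem stmt_9 (k : ℕ) (hk : 1 ≤ k) :
    ∃ γ₀ > (0 : ℝ), ∀ γ : ℝ, 0 < γ → γ ≤ γ₀ →
    ∃ γ'₀ > (0 : ℝ), ∀ γ' : ℝ, 0 < γ' → γ' ≤ γ'₀ →
    ∃ n₀ : ℕ, ∀ (V : Type) (_ : Fintype V) (_ : DecidableEq V),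
      n₀ ≤ Fintype.card V →
      ∀ E : Finset (Finset V), (∀ e ∈ E, e.card = k) →
      γ * (Fintype.card V : ℝ) ^ k / k ≤ (E.card : ℝ) →
      ∀ x y : V,
      γ * (Fintype.card V : ℝ) ^ (k - 1) ≤ ((link E k x ∩ link E k y).card : ℝ) →
      γ' * (Fintype.card V : ℝ) ^ (2 * k - 1) ≤
        (((Finset.univ : Finset (Finset V)).filter
          (fun X => X.card = 2 * k - 1 ∧
            (∃ M, IsPMOn E (insert x X) M) ∧ (∃ M, IsPMOn E (insert y X) M))).card : ℝ) := by
  have hk0 : (0:ℝ) < k := by exact_mod_cast hk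
  refine ⟨1, one_pos, fun γ hγ _ => ?_⟩
  have hD0 : (0:ℝ) < 2 ^ (2 * k - 1) := by positivity
  have hden : (0:ℝ) < 2 * k * 2 ^ (2 * k - 1) := by
    exact mul_pos (mul_pos two_pos hk0) hD0
  refine ⟨γ ^ 2 / (2 * k * 2 ^ (2 * k - 1)), div_pos (pow_pos hγ 2) hden,
    fun γ' hγ' hγ'le => ?_⟩
  refine ⟨⌈2 * k * (k + 1) / γ⌉₊ + 1, fun V _ _ hn E hEk hEdens x y hL => ?_⟩
  classical
  set n := Fintype.card V with hn_def
  set N : ℝ := (n : ℝ) with hN_def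
  have hN0 : (0:ℝ) ≤ N := Nat.cast_nonneg _
  have hnR : 2 * (k:ℝ) * ((k:ℝ) + 1) / γ ≤ N := by
    have h1 : ((2 * k * (k + 1) : ℕ) : ℝ) / γ ≤ N := by
      refine le_trans (Nat.le_ceil _) ?_
      rw [hN_def]
      exact_mod_cast le_trans (Nat.le_succ _) hn
    calc 2 * (k:ℝ) * ((k:ℝ) + 1) / γ = ((2 * k * (k + 1) : ℕ) : ℝ) / γ := by push_cast; ring
      _ ≤ N := h1
  -- the set of good pairs
  set L := link E k x ∩ link E k y with hL_def
  set P := L.sigma (fun S => E.filter (fun e => Disjoint e (insert x (insert y S)))) with hP_def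
  set T := ((Finset.univ : Finset (Finset V)).filter
          (fun X => X.card = 2 * k - 1 ∧
            (∃ M, IsPMOn E (insert x X) M) ∧ (∃ M, IsPMOn E (insert y X) M))) with hT_def
  -- facts about elements of P
  have hPelt : ∀ p ∈ P, p.1.card = k - 1 ∧ p.2.card = k ∧ Disjoint p.1 p.2 ∧
      (p.1 ∪ p.2) ∈ T := by
    rintro ⟨S, e⟩ hp
    rw [hP_def, Finset.mem_sigma] at hp
    obtain ⟨hSL, he⟩ := hp
    rw [Finset.mem_filter] at he
    obtain ⟨heE, hd⟩ := he
    rw [hL_def, Finset.mem_inter] at hSL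
    obtain ⟨hSx, hSy⟩ := hSL
    rw [link, Finset.mem_filter] at hSx hSy
    obtain ⟨-, hScard, hxS, hxSE⟩ := hSx
    obtain ⟨-, -, hyS, hySE⟩ := hSy
    have hdS : Disjoint e S :=
      hd.mono_right ((Finset.subset_insert y S).trans (Finset.subset_insert x _))
    have hdx : Disjoint e (insert x S) :=
      hd.mono_right (Finset.insert_subset_insert x (Finset.subset_insert y S))
    have hdy : Disjoint e (insert y S) := hd.mono_right (Finset.subset_insert x _)
    have hecard : e.card = k := hEk e heE
    have hcard : (S ∪ e).card = 2 * k - 1 := by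
      rw [Finset.card_union_of_disjoint hdS.symm, hScard, hecard]; omega
    refine ⟨hScard, hecard, hdS.symm, ?_⟩
    rw [hT_def, Finset.mem_filter]
    exact ⟨Finset.mem_univ _, hcard, pm_exists hxS hxSE heE hdx, pm_exists hyS hySE heE hdy⟩
  -- upper count: fibers of the union map
  have hcount : P.card ≤ 2 ^ (2 * k - 1) * T.card := by
    apply Finset.card_le_mul_card_image_of_maps_to
      (f := fun p => p.1 ∪ p.2) (fun p hp => (hPelt p hp).2.2.2)
    intro X hX
    have hXcard : X.card = 2 * k - 1 := by
      rw [hT_def, Finset.mem_filter] at hX; exact hX.2.1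
    calc (P.filter (fun p => p.1 ∪ p.2 = X)).card ≤ X.powerset.card := by
          apply Finset.card_le_card_of_injOn (fun p => p.1)
          · rintro ⟨S, e⟩ hp
            rw [Finset.mem_coe, Finset.mem_filter] at hp
            rw [Finset.mem_coe, Finset.mem_powerset, ← hp.2]
            exact Finset.subset_union_left
          · rintro ⟨S₁, e₁⟩ h₁ ⟨S₂, e₂⟩ h₂ heq
            simp only [Finset.coe_filter, Set.mem_setOf_eq] at h₁ h₂
            simp only at heq
            subst heq
            have hd₁ := (hPelt _ h₁.1).2.2.1
            have hd₂ := (hPelt _ h₂.1).2.2.1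
            have he : e₁ = e₂ := by
              have h1 : e₁ = (S₁ ∪ e₁) \ S₁ := (Finset.union_sdiff_cancel_left hd₁).symm
              have h2 : e₂ = (S₁ ∪ e₂) \ S₁ := (Finset.union_sdiff_cancel_left hd₂).symm
              rw [h1, h2, h₁.2, h₂.2]
            subst he
            rfl
      _ = 2 ^ (2 * k - 1) := by rw [Finset.card_powerset, hXcard]
  -- lower count
  set c : ℝ := γ * N ^ k / k with hc_def
  have hnk : N ^ k = N ^ (k - 1) * N := by
    rw [← pow_succ]; congr 1; omega
  have hmeet : ((k:ℝ) + 1) * N ^ (k - 1) ≤ c / 2 := by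
    have h2k : (0:ℝ) < 2 * k := mul_pos two_pos hk0
    have hc2 : c / 2 = γ * N ^ k / (2 * k) := by
      rw [hc_def, div_div, mul_comm (k:ℝ) 2]
    rw [hc2, le_div_iff₀ h2k, hnk]
    have key : 2 * (k:ℝ) * ((k:ℝ) + 1) ≤ N * γ := (div_le_iff₀ hγ).1 hnR
    nlinarith [pow_nonneg hN0 (k - 1), mul_le_mul_of_nonneg_left key (pow_nonneg hN0 (k - 1))]
  have hstep : ∀ S ∈ L, c / 2 ≤
      ((E.filter (fun e => Disjoint e (insert x (insert y S)))).card : ℝ) := by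
    intro S hS
    have hScard : S.card = k - 1 := by
      rw [hL_def, Finset.mem_inter] at hS
      have := hS.1
      rw [link, Finset.mem_filter] at this
      exact this.2.1
    have hAcard : (insert x (insert y S)).card ≤ k + 1 := by
      calc (insert x (insert y S)).card ≤ (insert y S).card + 1 := Finset.card_insert_le _ _
        _ ≤ S.card + 1 + 1 := by have := Finset.card_insert_le y S; omega
        _ ≤ k + 1 := by omega
    have hnot : ((E.filter (fun e => ¬ Disjoint e (insert x (insert y S)))).card : ℝ) ≤
        ((k:ℝ) + 1) * N ^ (k - 1) := by
      have := (edges_meeting_le E hEk (insert x (insert y S))).trans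
        (Nat.mul_le_mul_right _ hAcard)
      calc ((E.filter (fun e => ¬ Disjoint e (insert x (insert y S)))).card : ℝ)
          ≤ (((k + 1) * n ^ (k - 1) : ℕ) : ℝ) := by exact_mod_cast this
        _ = ((k:ℝ) + 1) * N ^ (k - 1) := by push_cast; ring
    have hsplit : (E.filter (fun e => Disjoint e (insert x (insert y S)))).card +
        (E.filter (fun e => ¬ Disjoint e (insert x (insert y S)))).card = E.card :=
      Finset.card_filter_add_card_filter_not _
    have hsplitR : ((E.filter (fun e => Disjoint e (insert x (insert y S)))).card : ℝ) +
        ((E.filter (fun e => ¬ Disjoint e (insert x (insert y S)))).card : ℝ) = (E.card : ℝ) := by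
      exact_mod_cast hsplit
    have hc_le : c ≤ (E.card : ℝ) := hEdens
    linarith
  have hsum : (P.card : ℝ) =
      ∑ S ∈ L, ((E.filter (fun e => Disjoint e (insert x (insert y S)))).card : ℝ) := by
    rw [hP_def, Finset.card_sigma]
    push_cast
    rfl
  have hlow : (L.card : ℝ) * (c / 2) ≤ (P.card : ℝ) := by
    rw [hsum]
    have := Finset.card_nsmul_le_sum L
      (fun S => ((E.filter (fun e => Disjoint e (insert x (insert y S)))).card : ℝ)) (c / 2) hstep
    simpa [nsmul_eq_mul] using this
  have hc2nonneg : (0:ℝ) ≤ c / 2 := le_trans (by positivity) hmeet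
  have hlow2 : γ * N ^ (k - 1) * (c / 2) ≤ (P.card : ℝ) :=
    le_trans (mul_le_mul_of_nonneg_right hL hc2nonneg) hlow
  -- combine
  have hcountR : (P.card : ℝ) ≤ 2 ^ (2 * k - 1) * (T.card : ℝ) := by
    exact_mod_cast hcount
  have hpow : N ^ (k - 1) * N ^ k = N ^ (2 * k - 1) := by
    rw [← pow_add]; congr 1; omega
  have hkne : (k:ℝ) ≠ 0 := ne_of_gt hk0
  have hDne : ((2:ℝ) ^ (2 * k - 1)) ≠ 0 := ne_of_gt hD0
  have hfinal : γ ^ 2 / (2 * k * 2 ^ (2 * k - 1)) * N ^ (2 * k - 1) =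
      γ * N ^ (k - 1) * (c / 2) / 2 ^ (2 * k - 1) := by
    rw [hc_def, ← hpow]
    field_simp
  calc γ' * N ^ (2 * k - 1) ≤ γ ^ 2 / (2 * k * 2 ^ (2 * k - 1)) * N ^ (2 * k - 1) :=
        mul_le_mul_of_nonneg_right hγ'le (pow_nonneg hN0 _)
    _ = γ * N ^ (k - 1) * (c / 2) / 2 ^ (2 * k - 1) := hfinal
    _ ≤ (T.card : ℝ) := by
        rw [div_le_iff₀ hD0]
        calc γ * N ^ (k - 1) * (c / 2) ≤ (P.card : ℝ) := hlow2
          _ ≤ 2 ^ (2 * k - 1) * (T.card : ℝ) := hcountR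
          _ = (T.card : ℝ) * 2 ^ (2 * k - 1) := mul_comm _ _
end

section
/- Given k ∈ ℕ and ρ ∈ (0,1), there exists n₀ such that: if F is a k-uniform hypergraph on n ≥ n₀ vertices with ρ·C(n,k) ≤ |E(F)| ≤ (1−ρ)·C(n,k), then there exist distinct vertices v, v' with |N_F(v) △ N_F(v')| ≥ ρ(1−ρ)·n^(k−1)/(k+1)!. -/
open scoped symmDiff

set_option linter.unusedSectionVars false

open Finset


namespace Stmt16Aux

variable {V : Type*} [Fintype V] [DecidableEq V]

noncomputable def ordOf (m : ℕ) (v₀ : V) (A : Finset V) (j : Fin m) : V :=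
  if h : A.card = m then ((Finset.equivFinOfCardEq h).symm j : V) else v₀

lemma ordOf_mem {m : ℕ} (v₀ : V) {A : Finset V} (h : A.card = m) (j : Fin m) :
    ordOf m v₀ A j ∈ A := by
  simp only [ordOf, dif_pos h]
  exact Subtype.mem _

lemma ordOf_inj {m : ℕ} (v₀ : V) {A : Finset V} (h : A.card = m) {j j' : Fin m}
    (hjj : ordOf m v₀ A j = ordOf m v₀ A j') : j = j' := by
  simp only [ordOf, dif_pos h] at hjj
  exact (Finset.equivFinOfCardEq h).symm.injective (Subtype.coe_injective hjj)

lemma ordOf_surj {m : ℕ} (v₀ : V) {A : Finset V} (h : A.card = m) {x : V} (hx : x ∈ A) :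
    ∃ j, ordOf m v₀ A j = x :=
  ⟨(Finset.equivFinOfCardEq h) ⟨x, hx⟩, by simp [ordOf, dif_pos h]⟩

noncomputable def seqOf (m : ℕ) (v₀ : V) (A : Finset V) (π : Equiv.Perm (Fin m)) : Fin m → V :=
  fun j => ordOf m v₀ A (π j)

lemma seqOf_inj {m : ℕ} (v₀ : V) {A : Finset V} (h : A.card = m) (π : Equiv.Perm (Fin m)) :
    Function.Injective (seqOf m v₀ A π) :=
  fun _ _ hj => π.injective (ordOf_inj v₀ h hj)

lemma seqOf_image {m : ℕ} (v₀ : V) {A : Finset V} (h : A.card = m) (π : Equiv.Perm (Fin m)) :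
    univ.image (seqOf m v₀ A π) = A := by
  apply Finset.Subset.antisymm
  · intro x hx
    obtain ⟨j, _, rfl⟩ := mem_image.1 hx
    exact ordOf_mem v₀ h _
  · intro x hx
    obtain ⟨j, hj⟩ := ordOf_surj v₀ h hx
    exact mem_image.2 ⟨π.symm j, mem_univ _, by simp [seqOf, hj]⟩

lemma seqOf_mem {m : ℕ} (v₀ : V) {A : Finset V} (h : A.card = m) (π : Equiv.Perm (Fin m))
    (j : Fin m) : seqOf m v₀ A π j ∈ A :=
  ordOf_mem v₀ h _

lemma seqOf_right_inj {m : ℕ} (v₀ : V) {A : Finset V} (h : A.card = m)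
    {π π' : Equiv.Perm (Fin m)} (heq : seqOf m v₀ A π = seqOf m v₀ A π') : π = π' :=
  Equiv.ext fun j => ordOf_inj v₀ h (congrFun heq j)

def pathSet {m : ℕ} (a b : Fin m → V) (i : ℕ) : Finset V :=
  (univ.filter fun t : Fin m => i ≤ (t : ℕ)).image a ∪
    (univ.filter fun t : Fin m => (t : ℕ) < i).image b

def sharedSet {m : ℕ} (a b : Fin m → V) (i : ℕ) : Finset V :=
  (univ.filter fun t : Fin m => i < (t : ℕ)).image a ∪
    (univ.filter fun t : Fin m => (t : ℕ) < i).image b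

lemma pathSet_zero {m : ℕ} (a b : Fin m → V) : pathSet a b 0 = univ.image a := by
  have h1 : (univ.filter fun t : Fin m => 0 ≤ (t : ℕ)) = univ :=
    filter_true_of_mem (by intro t _; omega)
  have h2 : (univ.filter fun t : Fin m => (t : ℕ) < 0) = ∅ :=
    filter_false_of_mem (by intro t _; omega)
  simp [pathSet, h1, h2]

lemma pathSet_last {m : ℕ} (a b : Fin m → V) : pathSet a b m = univ.image b := by
  have h1 : (univ.filter fun t : Fin m => m ≤ (t : ℕ)) = ∅ :=
    filter_false_of_mem (by intro t _; have := t.isLt; omega)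
  have h2 : (univ.filter fun t : Fin m => (t : ℕ) < m) = univ :=
    filter_true_of_mem (by intro t _; exact t.isLt)
  simp [pathSet, h1, h2]

lemma pathSet_card {m : ℕ} {a b : Fin m → V} (ha : Function.Injective a)
    (hb : Function.Injective b) (hab : ∀ s t, a s ≠ b t) (i : ℕ) :
    (pathSet a b i).card = m := by
  rw [pathSet, card_union_of_disjoint, card_image_of_injective _ ha,
    card_image_of_injective _ hb]
  · have h := card_filter_add_card_filter_not
      (s := (univ : Finset (Fin m))) (p := fun t : Fin m => i ≤ (t : ℕ))
    have h2 : (univ.filter fun t : Fin m => ¬ i ≤ (t : ℕ))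
        = (univ.filter fun t : Fin m => (t : ℕ) < i) := by
      apply filter_congr; intro t _; simp [Nat.not_le]
    rw [h2] at h
    rw [card_univ, Fintype.card_fin] at h
    omega
  · rw [disjoint_left]
    intro x hx hx'
    obtain ⟨t, _, rfl⟩ := mem_image.1 hx
    obtain ⟨t', _, ht'⟩ := mem_image.1 hx'
    exact hab t t' ht'.symm

lemma pathSet_eq_insert {m : ℕ} (a b : Fin m → V) {i : ℕ} (hi : i < m) :
    pathSet a b i = insert (a ⟨i, hi⟩) (sharedSet a b i) := by
  ext x
  simp only [pathSet, sharedSet, mem_union, mem_image, mem_filter, mem_univ, true_and,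
    mem_insert]
  constructor
  · rintro (⟨t, ht, rfl⟩ | ⟨t, ht, rfl⟩)
    · rcases eq_or_lt_of_le ht with h | h
      · exact Or.inl (by congr 1; exact Fin.ext h.symm)
      · exact Or.inr (Or.inl ⟨t, h, rfl⟩)
    · exact Or.inr (Or.inr ⟨t, ht, rfl⟩)
  · rintro (rfl | ⟨t, ht, rfl⟩ | ⟨t, ht, rfl⟩)
    · exact Or.inl ⟨⟨i, hi⟩, le_refl _, rfl⟩
    · exact Or.inl ⟨t, le_of_lt ht, rfl⟩
    · exact Or.inr ⟨t, ht, rfl⟩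

lemma pathSet_succ_eq_insert {m : ℕ} (a b : Fin m → V) {i : ℕ} (hi : i < m) :
    pathSet a b (i + 1) = insert (b ⟨i, hi⟩) (sharedSet a b i) := by
  ext x
  simp only [pathSet, sharedSet, mem_union, mem_image, mem_filter, mem_univ, true_and,
    mem_insert]
  constructor
  · rintro (⟨t, ht, rfl⟩ | ⟨t, ht, rfl⟩)
    · exact Or.inr (Or.inl ⟨t, by omega, rfl⟩)
    · by_cases h : (t : ℕ) = i
      · exact Or.inl (by congr 1; exact Fin.ext h)
      · exact Or.inr (Or.inr ⟨t, by omega, rfl⟩)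
  · rintro (rfl | ⟨t, ht, rfl⟩ | ⟨t, ht, rfl⟩)
    · exact Or.inr ⟨⟨i, hi⟩, by simp, rfl⟩
    · exact Or.inl ⟨t, by omega, rfl⟩
    · exact Or.inr ⟨t, by omega, rfl⟩

lemma left_not_mem_shared {m : ℕ} {a b : Fin m → V} (ha : Function.Injective a)
    (hab : ∀ s t, a s ≠ b t) {i : ℕ} (hi : i < m) :
    a ⟨i, hi⟩ ∉ sharedSet a b i := by
  intro hmem
  rcases mem_union.1 hmem with h | h
  · simp only [mem_image, mem_filter, mem_univ, true_and] at h
    obtain ⟨t, ht, hteq⟩ := h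
    have := ha hteq
    rw [this] at ht
    simp at ht
  · simp only [mem_image, mem_filter, mem_univ, true_and] at h
    obtain ⟨t, _, hteq⟩ := h
    exact hab _ _ hteq.symm

lemma right_not_mem_shared {m : ℕ} {a b : Fin m → V} (hb : Function.Injective b)
    (hab : ∀ s t, a s ≠ b t) {i : ℕ} (hi : i < m) :
    b ⟨i, hi⟩ ∉ sharedSet a b i := by
  intro hmem
  rcases mem_union.1 hmem with h | h
  · simp only [mem_image, mem_filter, mem_univ, true_and] at h
    obtain ⟨t, _, hteq⟩ := h
    exact hab _ _ hteq
  · simp only [mem_image, mem_filter, mem_univ, true_and] at h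
    obtain ⟨t, ht, hteq⟩ := h
    have := hb hteq
    rw [this] at ht
    simp at ht

lemma left_ne_right {m : ℕ} {a b : Fin m → V} (hab : ∀ s t, a s ≠ b t) {i : ℕ} (hi : i < m) :
    a ⟨i, hi⟩ ≠ b ⟨i, hi⟩ := hab _ _

lemma sharedSet_card {m : ℕ} {a b : Fin m → V} (ha : Function.Injective a)
    (hb : Function.Injective b) (hab : ∀ s t, a s ≠ b t) {i : ℕ} (hi : i < m) :
    (sharedSet a b i).card = m - 1 := by
  have h1 := pathSet_card ha hb hab (a := a) (b := b) i
  rw [pathSet_eq_insert a b hi, card_insert_of_notMem (left_not_mem_shared ha hab hi)] at h1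
  omega

open scoped Classical in
noncomputable def crossIdx (E : Finset (Finset V)) {m : ℕ} (a b : Fin m → V) : ℕ :=
  if h : ∃ i, pathSet a b (i + 1) ∉ E then Nat.find h else 0

lemma crossIdx_spec {E : Finset (Finset V)} {m : ℕ} (hm : 0 < m) {a b : Fin m → V}
    (hA : univ.image a ∈ E) (hB : univ.image b ∉ E) :
    crossIdx E a b < m ∧ pathSet a b (crossIdx E a b) ∈ E ∧
      pathSet a b (crossIdx E a b + 1) ∉ E := by
  have hwit : pathSet a b ((m - 1) + 1) ∉ E := by
    rw [Nat.sub_add_cancel hm, pathSet_last]; exact hB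
  have hex : ∃ i, pathSet a b (i + 1) ∉ E := ⟨m - 1, hwit⟩
  classical
  rw [crossIdx, dif_pos hex]
  have h1 : Nat.find hex ≤ m - 1 := Nat.find_le hwit
  refine ⟨by omega, ?_, Nat.find_spec hex⟩
  rcases Nat.eq_zero_or_pos (Nat.find hex) with h | h
  · rw [h, pathSet_zero]; exact hA
  · have h2 := Nat.find_min hex (show Nat.find hex - 1 < Nat.find hex by omega)
    rw [not_not] at h2
    have h3 : Nat.find hex - 1 + 1 = Nat.find hex := by omega
    rwa [h3] at h2

lemma image_tau {m : ℕ} (a b : Fin m → V) (i : ℕ) :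
    univ.image (fun j : Fin m => if (j : ℕ) < i then b j else a j) = pathSet a b i := by
  ext x
  simp only [pathSet, mem_image, mem_union, mem_filter, mem_univ, true_and]
  constructor
  · rintro ⟨t, rfl⟩
    by_cases h : (t : ℕ) < i
    · exact Or.inr ⟨t, h, by simp [h]⟩
    · exact Or.inl ⟨t, by omega, by simp [h]⟩
  · rintro (⟨t, ht, rfl⟩ | ⟨t, ht, rfl⟩)
    · exact ⟨t, by simp [Nat.not_lt.2 ht]⟩
    · exact ⟨t, by simp [ht]⟩

lemma tau_inj {m : ℕ} {a b : Fin m → V} (ha : Function.Injective a)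
    (hb : Function.Injective b) (hab : ∀ s t, a s ≠ b t) (i : ℕ) :
    Function.Injective (fun j : Fin m => if (j : ℕ) < i then b j else a j) := by
  intro s t hst
  by_cases hs : (s : ℕ) < i <;> by_cases ht : (t : ℕ) < i <;> simp [hs, ht] at hst
  · exact hb hst
  · exact absurd hst.symm (hab _ _)
  · exact absurd hst (hab _ _)
  · exact ha hst

noncomputable def mainMap (E : Finset (Finset V)) (k : ℕ) (v₀ : V)
    (z : (Finset V × Finset V) × (Equiv.Perm (Fin (k + 1)) × Equiv.Perm (Fin (k + 1)))) :
    Σ _ : (Σ _ : V × V, Finset V), (Fin (k + 1) → V) × (Fin k → V) :=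
  let a := seqOf (k + 1) v₀ z.1.1 z.2.1
  let b := seqOf (k + 1) v₀ z.1.2 z.2.2
  let i := crossIdx E a b
  ⟨⟨(a ⟨i % (k + 1), Nat.mod_lt _ k.succ_pos⟩, b ⟨i % (k + 1), Nat.mod_lt _ k.succ_pos⟩),
      sharedSet a b i⟩,
    (fun j => if (j : ℕ) < i then b j else a j,
     fun j => if (j : ℕ) < i then a j.castSucc else b j.succ)⟩

lemma card_filter_image_eq_le (m : ℕ) (e : Finset V) (he : e.card = m) :
    ((univ : Finset (Fin m → V)).filter (fun g => univ.image g = e)).card ≤ (Nat.factorial m) := by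
  classical
  set s := (univ : Finset (Fin m → V)).filter (fun g => univ.image g = e) with hs
  have key : ∀ g ∈ s, ∀ j, g j ∈ e := by
    intro g hg j
    have h2 := (mem_filter.1 hg).2
    rw [← h2]
    exact mem_image_of_mem g (mem_univ j)
  have inj : ∀ g ∈ s, Function.Injective g := by
    intro g hg
    have h2 := (mem_filter.1 hg).2
    have h3 : ((univ : Finset (Fin m)).image g).card = (univ : Finset (Fin m)).card := by
      rw [h2, he, card_univ, Fintype.card_fin]
    have h4 := injOn_of_card_image_eq h3
    rw [coe_univ] at h4
    exact Set.injOn_univ.1 h4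
  have hcard : s.card = Fintype.card {g // g ∈ s} := (Fintype.card_coe s).symm
  rw [hcard]
  have hle : Fintype.card {g // g ∈ s} ≤ Fintype.card (Fin m ↪ e) := by
    apply Fintype.card_le_of_injective (fun g =>
      ⟨fun j => ⟨g.1 j, key g.1 g.2 j⟩,
        fun j j' hjj => inj g.1 g.2 (congrArg Subtype.val hjj)⟩)
    intro g g' hgg
    apply Subtype.ext
    funext j
    have := DFunLike.congr_fun hgg j
    exact congrArg Subtype.val this
  calc Fintype.card {g // g ∈ s} ≤ Fintype.card (Fin m ↪ e) := hle
    _ = (Nat.factorial m) := by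
        rw [Fintype.card_embedding_eq, Fintype.card_coe, he, Fintype.card_fin,
          Nat.descFactorial_self]

lemma mainMap_facts (E : Finset (Finset V)) (k : ℕ) (v₀ : V)
    (z : (Finset V × Finset V) × (Equiv.Perm (Fin (k + 1)) × Equiv.Perm (Fin (k + 1))))
    (hAE : z.1.1 ∈ E) (hAcard : z.1.1.card = k + 1) (hBcard : z.1.2.card = k + 1)
    (hBE : z.1.2 ∉ E) (hdisj : Disjoint z.1.1 z.1.2)
    (a b : Fin (k + 1) → V) (haz : a = seqOf (k + 1) v₀ z.1.1 z.2.1)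
    (hbz : b = seqOf (k + 1) v₀ z.1.2 z.2.2)
    (i : ℕ) (hi : i = crossIdx E a b) :
    ∃ hik : i < k + 1,
      Function.Injective a ∧ Function.Injective b ∧ (∀ s t, a s ≠ b t) ∧
      univ.image a = z.1.1 ∧ univ.image b = z.1.2 ∧
      pathSet a b i ∈ E ∧ pathSet a b (i + 1) ∉ E ∧
      mainMap E k v₀ z =
        ⟨⟨(a ⟨i, hik⟩, b ⟨i, hik⟩), sharedSet a b i⟩,
         (fun j => if (j : ℕ) < i then b j else a j,
          fun j => if (j : ℕ) < i then a j.castSucc else b j.succ)⟩ := by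
  subst haz; subst hbz; subst hi
  have hai : Function.Injective (seqOf (k + 1) v₀ z.1.1 z.2.1) := seqOf_inj v₀ hAcard _
  have hbi : Function.Injective (seqOf (k + 1) v₀ z.1.2 z.2.2) := seqOf_inj v₀ hBcard _
  have hima := seqOf_image v₀ hAcard z.2.1
  have himb := seqOf_image v₀ hBcard z.2.2
  have hab : ∀ s t, seqOf (k + 1) v₀ z.1.1 z.2.1 s ≠ seqOf (k + 1) v₀ z.1.2 z.2.2 t := by
    intro s t heq
    have h1 : seqOf (k + 1) v₀ z.1.1 z.2.1 s ∈ z.1.1 := seqOf_mem v₀ hAcard _ _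
    have h2 : seqOf (k + 1) v₀ z.1.2 z.2.2 t ∈ z.1.2 := seqOf_mem v₀ hBcard _ _
    rw [heq] at h1
    exact (Finset.disjoint_left.1 hdisj h1) h2
  obtain ⟨hlt, hmemE, hnot⟩ := crossIdx_spec (E := E) k.succ_pos
    (by rw [hima]; exact hAE) (by rw [himb]; exact hBE)
  refine ⟨hlt, hai, hbi, hab, hima, himb, hmemE, hnot, ?_⟩
  have hmod : crossIdx E (seqOf (k + 1) v₀ z.1.1 z.2.1) (seqOf (k + 1) v₀ z.1.2 z.2.2) % (k + 1)
      = crossIdx E (seqOf (k + 1) v₀ z.1.1 z.2.1) (seqOf (k + 1) v₀ z.1.2 z.2.2) :=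
    Nat.mod_eq_of_lt hlt
  simp only [mainMap, hmod]

lemma mainMap_mapsTo (E : Finset (Finset V)) (k : ℕ) (v₀ : V)
    (hE : ∀ e ∈ E, e.card = k + 1)
    (z : (Finset V × Finset V) × (Equiv.Perm (Fin (k + 1)) × Equiv.Perm (Fin (k + 1))))
    (hz : z ∈ ((E ×ˢ (Finset.powersetCard (k + 1) univ \ E)).filter
        (fun p => Disjoint p.1 p.2)) ×ˢ
        (univ : Finset (Equiv.Perm (Fin (k + 1)) × Equiv.Perm (Fin (k + 1))))) :
    mainMap E k v₀ z ∈
      (((univ : Finset V).offDiag).sigma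
        (fun p => link E (k + 1) p.1 \ link E (k + 1) p.2)).sigma
        (fun q => ((univ : Finset (Fin (k + 1) → V)).filter
          (fun g => univ.image g = insert q.1.1 q.2)) ×ˢ (univ : Finset (Fin k → V))) := by
  classical
  obtain ⟨hz1, -⟩ := mem_product.1 hz
  obtain ⟨hz2, hzd⟩ := mem_filter.1 hz1
  obtain ⟨hzA, hzB⟩ := mem_product.1 hz2
  have hBk : z.1.2.card = k + 1 := (mem_powersetCard.1 (mem_sdiff.1 hzB).1).2
  have hBE : z.1.2 ∉ E := (mem_sdiff.1 hzB).2
  have hAk : z.1.1.card = k + 1 := hE _ hzA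
  obtain ⟨hik, hai, hbi, hab, hima, himb, hmemE, hnotE, heq⟩ :=
    mainMap_facts E k v₀ z hzA hAk hBk hBE hzd _ _ rfl rfl _ rfl
  rw [heq]
  rw [mem_sigma]
  constructor
  · rw [mem_sigma]
    constructor
    · rw [Finset.mem_offDiag]
      exact ⟨mem_univ _, mem_univ _, left_ne_right hab hik⟩
    · rw [mem_sdiff]
      constructor
      · rw [link, mem_filter]
        refine ⟨mem_univ _, ?_, left_not_mem_shared hai hab hik, ?_⟩
        · rw [sharedSet_card hai hbi hab hik]
        · rw [← pathSet_eq_insert _ _ hik]; exact hmemE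
      · rw [link, mem_filter]
        rintro ⟨-, -, -, hbad⟩
        rw [← pathSet_succ_eq_insert _ _ hik] at hbad
        exact hnotE hbad
  · rw [mem_product]
    refine ⟨?_, mem_univ _⟩
    rw [mem_filter]
    refine ⟨mem_univ _, ?_⟩
    rw [image_tau]
    exact pathSet_eq_insert _ _ hik

lemma mainMap_injOn (E : Finset (Finset V)) (k : ℕ) (v₀ : V)
    (hE : ∀ e ∈ E, e.card = k + 1) :
    Set.InjOn (mainMap E k v₀)
      ((((E ×ˢ (Finset.powersetCard (k + 1) univ \ E)).filter
        (fun p => Disjoint p.1 p.2)) ×ˢ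
        (univ : Finset (Equiv.Perm (Fin (k + 1)) × Equiv.Perm (Fin (k + 1))))) : Finset _) := by
  classical
  rintro z hz z' hz' heq
  rw [Finset.mem_coe] at hz hz'
  obtain ⟨hz1, -⟩ := mem_product.1 hz
  obtain ⟨hz2, hzd⟩ := mem_filter.1 hz1
  obtain ⟨hzA, hzB⟩ := mem_product.1 hz2
  have hBk : z.1.2.card = k + 1 := (mem_powersetCard.1 (mem_sdiff.1 hzB).1).2
  have hBE : z.1.2 ∉ E := (mem_sdiff.1 hzB).2
  have hAk : z.1.1.card = k + 1 := hE _ hzA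
  obtain ⟨hz1', -⟩ := mem_product.1 hz'
  obtain ⟨hz2', hzd'⟩ := mem_filter.1 hz1'
  obtain ⟨hzA', hzB'⟩ := mem_product.1 hz2'
  have hBk' : z'.1.2.card = k + 1 := (mem_powersetCard.1 (mem_sdiff.1 hzB').1).2
  have hBE' : z'.1.2 ∉ E := (mem_sdiff.1 hzB').2
  have hAk' : z'.1.1.card = k + 1 := hE _ hzA'
  obtain ⟨hik, hai, hbi, hab, hima, himb, hmemE, hnotE, hmeq⟩ :=
    mainMap_facts E k v₀ z hzA hAk hBk hBE hzd _ _ rfl rfl _ rfl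
  obtain ⟨hik', hai', hbi', hab', hima', himb', hmemE', hnotE', hmeq'⟩ :=
    mainMap_facts E k v₀ z' hzA' hAk' hBk' hBE' hzd' _ _ rfl rfl _ rfl
  set a := seqOf (k + 1) v₀ z.1.1 z.2.1 with hadef
  set b := seqOf (k + 1) v₀ z.1.2 z.2.2 with hbdef
  set a' := seqOf (k + 1) v₀ z'.1.1 z'.2.1 with hadef'
  set b' := seqOf (k + 1) v₀ z'.1.2 z'.2.2 with hbdef'
  set i := crossIdx E a b with hidef
  set i' := crossIdx E a' b' with hidef'
  rw [hmeq, hmeq'] at heq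
  -- extract component equalities
  have h1 : (⟨(a ⟨i, hik⟩, b ⟨i, hik⟩), sharedSet a b i⟩ : Σ _ : V × V, Finset V)
      = ⟨(a' ⟨i', hik'⟩, b' ⟨i', hik'⟩), sharedSet a' b' i'⟩ := congrArg Sigma.fst heq
  have h2 : ((fun j : Fin (k + 1) => if (j : ℕ) < i then b j else a j),
        (fun j : Fin k => if (j : ℕ) < i then a j.castSucc else b j.succ))
      = ((fun j : Fin (k + 1) => if (j : ℕ) < i' then b' j else a' j),
        (fun j : Fin k => if (j : ℕ) < i' then a' j.castSucc else b' j.succ)) :=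
    congrArg Sigma.snd heq
  have hvv : ((a ⟨i, hik⟩, b ⟨i, hik⟩) : V × V) = (a' ⟨i', hik'⟩, b' ⟨i', hik'⟩) :=
    congrArg Sigma.fst h1
  have hva : a ⟨i, hik⟩ = a' ⟨i', hik'⟩ := congrArg Prod.fst hvv
  have hvb : b ⟨i, hik⟩ = b' ⟨i', hik'⟩ := congrArg Prod.snd hvv
  have hτ : (fun j : Fin (k + 1) => if (j : ℕ) < i then b j else a j)
      = (fun j : Fin (k + 1) => if (j : ℕ) < i' then b' j else a' j) := congrArg Prod.fst h2
  have hx : (fun j : Fin k => if (j : ℕ) < i then a j.castSucc else b j.succ)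
      = (fun j : Fin k => if (j : ℕ) < i' then a' j.castSucc else b' j.succ) :=
    congrArg Prod.snd h2
  -- i = i'
  have hii : i' = i := by
    have e1 : (if ((⟨i', hik'⟩ : Fin (k + 1)) : ℕ) < i then b ⟨i', hik'⟩ else a ⟨i', hik'⟩)
        = a ⟨i, hik⟩ := by
      have := congrFun hτ ⟨i', hik'⟩
      simp only at this
      rw [this, if_neg (lt_irrefl i'), ← hva]
    have e2 : (if ((⟨i, hik⟩ : Fin (k + 1)) : ℕ) < i then b ⟨i, hik⟩ else a ⟨i, hik⟩)
        = a ⟨i, hik⟩ := by rw [if_neg (lt_irrefl i)]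
    have e3 := tau_inj hai hbi hab i (e1.trans e2.symm)
    exact congrArg Fin.val e3
  -- a = a'
  have haa : a = a' := by
    funext j
    by_cases hj : (j : ℕ) < i
    · have hjk : (j : ℕ) < k := by omega
      have l : Fin k := ⟨(j : ℕ), hjk⟩
      have hc : ((⟨(j : ℕ), hjk⟩ : Fin k)).castSucc = j := Fin.ext (by simp)
      have e1 : (if ((⟨(j : ℕ), hjk⟩ : Fin k) : ℕ) < i
          then a (⟨(j : ℕ), hjk⟩ : Fin k).castSucc else b (⟨(j : ℕ), hjk⟩ : Fin k).succ)
          = a j := by rw [if_pos hj, hc]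
      have e2 : (if ((⟨(j : ℕ), hjk⟩ : Fin k) : ℕ) < i'
          then a' (⟨(j : ℕ), hjk⟩ : Fin k).castSucc else b' (⟨(j : ℕ), hjk⟩ : Fin k).succ)
          = a' j := by rw [if_pos (by omega : (j : ℕ) < i'), hc]
      rw [← e1, ← e2]
      exact congrFun hx _
    · have e1 : (if (j : ℕ) < i then b j else a j) = a j := if_neg hj
      have e2 : (if (j : ℕ) < i' then b' j else a' j) = a' j := if_neg (by omega)
      rw [← e1, ← e2]
      exact congrFun hτ _
  -- b = b'
  have hbb : b = b' := by
    funext j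
    rcases lt_trichotomy ((j : ℕ)) i with hj | hj | hj
    · have e1 : (if (j : ℕ) < i then b j else a j) = b j := if_pos hj
      have e2 : (if (j : ℕ) < i' then b' j else a' j) = b' j := if_pos (by omega)
      rw [← e1, ← e2]
      exact congrFun hτ _
    · have hji : j = (⟨i, hik⟩ : Fin (k + 1)) := Fin.ext hj
      have hji' : j = (⟨i', hik'⟩ : Fin (k + 1)) := Fin.ext (show (j : ℕ) = i' by omega)
      calc b j = b ⟨i, hik⟩ := congrArg b hji
        _ = b' ⟨i', hik'⟩ := hvb
        _ = b' j := (congrArg b' hji').symm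
    · have hjk : (j : ℕ) - 1 < k := by omega
      have hs : ((⟨(j : ℕ) - 1, hjk⟩ : Fin k)).succ = j :=
        Fin.ext (by simp only [Fin.val_succ]; omega)
      have e1 : (if ((⟨(j : ℕ) - 1, hjk⟩ : Fin k) : ℕ) < i
          then a (⟨(j : ℕ) - 1, hjk⟩ : Fin k).castSucc else b (⟨(j : ℕ) - 1, hjk⟩ : Fin k).succ)
          = b j := by rw [if_neg (show ¬ ((j : ℕ) - 1 < i) by omega), hs]
      have e2 : (if ((⟨(j : ℕ) - 1, hjk⟩ : Fin k) : ℕ) < i'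
          then a' (⟨(j : ℕ) - 1, hjk⟩ : Fin k).castSucc else b' (⟨(j : ℕ) - 1, hjk⟩ : Fin k).succ)
          = b' j := by rw [if_neg (show ¬ ((j : ℕ) - 1 < i') by omega), hs]
      rw [← e1, ← e2]
      exact congrFun hx _
  -- recover components
  have hAA : z.1.1 = z'.1.1 := by rw [← hima, ← hima', haa]
  have hBB : z.1.2 = z'.1.2 := by rw [← himb, ← himb', hbb]
  have hππ : z.2.1 = z'.2.1 := by
    apply seqOf_right_inj v₀ hAk
    rw [← hadef, haa, hadef', hAA]
  have hσσ : z.2.2 = z'.2.2 := by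
    apply seqOf_right_inj v₀ hBk
    rw [← hbdef, hbb, hbdef', hBB]
  have hz12 : z.1 = z'.1 := Prod.ext hAA hBB
  have hz22 : z.2 = z'.2 := Prod.ext hππ hσσ
  exact Prod.ext hz12 hz22

end Stmt16Aux

set_option maxHeartbeats 1000000 in
theorem stmt_16 (k : ℕ) (ρ : ℝ) (hρ0 : 0 < ρ) (hρ1 : ρ < 1) :
    ∃ n₀ : ℕ, ∀ (V : Type) (_ : Fintype V) (_ : DecidableEq V),
      n₀ ≤ Fintype.card V →
      ∀ E : Finset (Finset V), (∀ e ∈ E, e.card = k) →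
      ρ * (Nat.choose (Fintype.card V) k : ℝ) ≤ (E.card : ℝ) →
      (E.card : ℝ) ≤ (1 - ρ) * (Nat.choose (Fintype.card V) k : ℝ) →
      ∃ v v' : V, v ≠ v' ∧
        ρ * (1 - ρ) * (Fintype.card V : ℝ) ^ (k - 1) / (Nat.factorial (k + 1) : ℝ)
          ≤ (((link E k v) ∆ (link E k v')).card : ℝ) := by
  classical
  open Finset Stmt16Aux in
  rcases k with _ | k
  · -- k = 0 : hypotheses are contradictory
    refine ⟨1, ?_⟩
    intro V iF iD hn E hEcard hlow hupp
    exfalso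
    simp only [Nat.choose_zero_right, Nat.cast_one, mul_one] at hlow hupp
    rcases Nat.eq_zero_or_pos E.card with h | h
    · rw [h] at hlow; simp at hlow; linarith
    · have h1 : (1 : ℝ) ≤ (E.card : ℝ) := by exact_mod_cast h
      linarith
  · refine ⟨max (k + 2) (max (2 * (2 * k + 2) * k + 1) (⌈(2 * ((k : ℝ) + 1) ^ 2) / ρ⌉₊ + 1)), ?_⟩
    intro V iF iD hn E hEcard hlow hupp
    letI := iF; letI := iD
    set n := Fintype.card V with hndef
    have hn1 : k + 2 ≤ n := le_trans (le_max_left _ _) hn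
    have hn2 : 2 * (2 * k + 2) * k + 1 ≤ n :=
      le_trans (le_trans (le_max_left _ _) (le_max_right _ _)) hn
    have hn3 : (2 * ((k : ℝ) + 1) ^ 2) / ρ ≤ (n : ℝ) := by
      have h1 : (⌈(2 * ((k : ℝ) + 1) ^ 2) / ρ⌉₊ + 1 : ℕ) ≤ n :=
        le_trans (le_trans (le_max_right _ _) (le_max_right _ _)) hn
      calc (2 * ((k : ℝ) + 1) ^ 2) / ρ ≤ (⌈(2 * ((k : ℝ) + 1) ^ 2) / ρ⌉₊ : ℝ) := Nat.le_ceil _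
        _ ≤ (n : ℝ) := by exact_mod_cast Nat.le_of_succ_le h1
    have hnpos : 0 < n := by omega
    obtain ⟨v₀⟩ : Nonempty V := Fintype.card_pos_iff.1 hnpos
    by_contra hcon
    push_neg at hcon
    simp only [Nat.add_sub_cancel] at hcon
    -- local finsets
    set notE := Finset.powersetCard (k + 1) (univ : Finset V) \ E with hnotEdef
    set Pd := (E ×ˢ notE).filter (fun p => Disjoint p.1 p.2) with hPddef
    set Tri := ((univ : Finset V).offDiag).sigma
      (fun p => link E (k + 1) p.1 \ link E (k + 1) p.2) with hTridef
    have hEsub : E ⊆ Finset.powersetCard (k + 1) univ := fun A hA =>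
      mem_powersetCard.2 ⟨subset_univ _, hEcard A hA⟩
    have hElecard : E.card ≤ Nat.choose n (k + 1) := by
      have h1 := card_le_card hEsub
      rwa [card_powersetCard, card_univ, ← hndef] at h1
    -- main counting inequality via the injection `mainMap`
    have hmain : Pd.card * (Nat.factorial (k + 1) * Nat.factorial (k + 1))
        ≤ Tri.card * (Nat.factorial (k + 1) * n ^ k) := by
      have h1 := card_le_card_of_injOn (mainMap E k v₀)
        (fun z hz => mainMap_mapsTo E k v₀ hEcard z hz)
        (mainMap_injOn E k v₀ hEcard)
      rw [card_product, card_univ, Fintype.card_prod, Fintype.card_perm, Fintype.card_fin] at h1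
      have h2 : (Tri.sigma (fun q => ((univ : Finset (Fin (k + 1) → V)).filter
          (fun g => univ.image g = insert q.1.1 q.2)) ×ˢ (univ : Finset (Fin k → V)))).card
          ≤ Tri.card * (Nat.factorial (k + 1) * n ^ k) := by
        rw [card_sigma]
        have hbound : ∀ q ∈ Tri, (((univ : Finset (Fin (k + 1) → V)).filter
            (fun g => univ.image g = insert q.1.1 q.2)) ×ˢ (univ : Finset (Fin k → V))).card
            ≤ Nat.factorial (k + 1) * n ^ k := by
          intro q hq
          rw [card_product, card_univ, Fintype.card_fun, Fintype.card_fin, ← hndef]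
          have hq' := mem_sigma.1 hq
          have hq2 := (mem_sdiff.1 hq'.2).1
          rw [link, mem_filter] at hq2
          have hcardS : q.2.card = k := by simpa using hq2.2.1
          have hins : (insert q.1.1 q.2).card = k + 1 := by
            rw [card_insert_of_notMem hq2.2.2.1, hcardS]
          exact Nat.mul_le_mul (card_filter_image_eq_le (k + 1) _ hins) (le_refl _)
        calc ∑ q ∈ Tri, (((univ : Finset (Fin (k + 1) → V)).filter
              (fun g => univ.image g = insert q.1.1 q.2)) ×ˢ (univ : Finset (Fin k → V))).card
            ≤ Tri.card • (Nat.factorial (k + 1) * n ^ k) := sum_le_card_nsmul _ _ _ hbound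
          _ = Tri.card * (Nat.factorial (k + 1) * n ^ k) := by rw [smul_eq_mul]
      exact le_trans h1 h2
    have hNat : Pd.card * Nat.factorial (k + 1) ≤ Tri.card * n ^ k := by
      have h4 : Pd.card * (Nat.factorial (k + 1) * Nat.factorial (k + 1))
          = (Pd.card * Nat.factorial (k + 1)) * Nat.factorial (k + 1) := by ring
      have h5 : Tri.card * (Nat.factorial (k + 1) * n ^ k)
          = (Tri.card * n ^ k) * Nat.factorial (k + 1) := by ring
      rw [h4, h5] at hmain
      exact Nat.le_of_mul_le_mul_right hmain (Nat.factorial_pos _)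
    -- Pd fiberwise count
    have hPdsum : Pd.card = ∑ B ∈ notE, (E.filter (fun A => Disjoint A B)).card := by
      rw [card_eq_sum_card_fiberwise (f := fun p : Finset V × Finset V => p.2) (t := notE)
        (fun p hp => (mem_product.1 (mem_filter.1 hp).1).2)]
      refine sum_congr rfl fun B hB => ?_
      apply card_bij (fun p (_ : p ∈ Pd.filter (fun p => p.2 = B)) => p.1)
      · intro p hp
        obtain ⟨hp1, hp2⟩ := mem_filter.1 hp
        obtain ⟨hp3, hp4⟩ := mem_filter.1 hp1
        rw [mem_filter]
        exact ⟨(mem_product.1 hp3).1, hp2 ▸ hp4⟩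
      · intro p hp q hq hpq
        have hp2 := (mem_filter.1 hp).2
        have hq2 := (mem_filter.1 hq).2
        exact Prod.ext hpq (hp2.trans hq2.symm)
      · intro A hA
        obtain ⟨hA1, hA2⟩ := mem_filter.1 hA
        refine ⟨(A, B), ?_, rfl⟩
        rw [mem_filter]
        refine ⟨?_, rfl⟩
        rw [hPddef, mem_filter]
        exact ⟨mem_product.2 ⟨hA1, hB⟩, hA2⟩
    -- per-B bound on intersecting edges
    have hperB : ∀ B ∈ notE, (E.filter (fun A => ¬ Disjoint A B)).card
        ≤ (k + 1) * Nat.choose (n - 1) k := by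
      intro B hB
      have hBcard : B.card = k + 1 := (mem_powersetCard.1 (mem_sdiff.1 hB).1).2
      have hsub2 : E.filter (fun A => ¬ Disjoint A B)
          ⊆ B.biUnion (fun v => E.filter (fun A => v ∈ A)) := by
        intro A hA
        rw [mem_filter] at hA
        obtain ⟨x, hx1, hx2⟩ := Finset.not_disjoint_iff.1 hA.2
        exact mem_biUnion.2 ⟨x, hx2, mem_filter.2 ⟨hA.1, hx1⟩⟩
      refine le_trans (card_le_card hsub2) (le_trans card_biUnion_le ?_)
      have hv : ∀ v ∈ B, (E.filter (fun A => v ∈ A)).card ≤ Nat.choose (n - 1) k := by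
        intro v hvB
        have h6 : (E.filter (fun A => v ∈ A)).card
            ≤ (Finset.powersetCard k (univ.erase v)).card := by
          apply card_le_card_of_injOn (fun A => A.erase v)
          · intro A hA
            rw [Finset.mem_coe, mem_filter] at hA
            simp only [Finset.mem_coe]
            rw [mem_powersetCard]
            refine ⟨erase_subset_erase v (subset_univ A), ?_⟩
            rw [card_erase_of_mem hA.2, hEcard A hA.1]
            omega
          · intro A hA A' hA' hAA
            rw [Finset.mem_coe, mem_filter] at hA hA'
            rw [← insert_erase hA.2, ← insert_erase hA'.2]
            simp only at hAA
            rw [hAA]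
        rwa [card_powersetCard, card_erase_of_mem (mem_univ v), card_univ, ← hndef] at h6
      refine le_trans (sum_le_card_nsmul _ _ (Nat.choose (n - 1) k) hv) ?_
      rw [hBcard, smul_eq_mul]
    -- real-number quantities
    set K := ((Nat.choose n (k + 1) : ℕ) : ℝ) with hKdef
    set m := ((E.card : ℕ) : ℝ) with hmdef
    set F1 := ((Nat.factorial (k + 1) : ℕ) : ℝ) with hF1def
    set F2 := ((Nat.factorial (k + 1 + 1) : ℕ) : ℝ) with hF2def
    have hKpos : 0 < K := by
      rw [hKdef]; exact_mod_cast Nat.choose_pos (by omega : k + 1 ≤ n)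
    have hF1pos : 0 < F1 := by rw [hF1def]; exact_mod_cast Nat.factorial_pos _
    have hF2pos : 0 < F2 := by rw [hF2def]; exact_mod_cast Nat.factorial_pos _
    have hF21 : F2 = ((k : ℝ) + 1 + 1) * F1 := by
      rw [hF1def, hF2def, Nat.factorial_succ (k + 1)]; push_cast; ring
    have hnR : (0 : ℝ) < (n : ℝ) := by exact_mod_cast hnpos
    have hNk : (0 : ℝ) < (n : ℝ) ^ k := pow_pos hnR k
    have hCbd : ((k : ℝ) + 1) * (Nat.choose (n - 1) k : ℝ) ≤ ρ * K / 2 := by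
      have hid : n * Nat.choose (n - 1) k = Nat.choose n (k + 1) * (k + 1) := by
        have h7 := Nat.add_one_mul_choose_eq (n - 1) k
        rw [Nat.sub_add_cancel (by omega : 1 ≤ n)] at h7
        exact h7
      have hcast : (n : ℝ) * (Nat.choose (n - 1) k : ℝ) = K * ((k : ℝ) + 1) := by
        rw [hKdef]; exact_mod_cast hid
      have hρn : 2 * ((k : ℝ) + 1) ^ 2 ≤ ρ * n := by
        rw [div_le_iff₀ hρ0] at hn3; linarith
      have hcpos : (0 : ℝ) ≤ (Nat.choose (n - 1) k : ℝ) := Nat.cast_nonneg _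
      have h8 : 2 * ((k : ℝ) + 1) ^ 2 * (Nat.choose (n - 1) k : ℝ)
          ≤ ρ * K * ((k : ℝ) + 1) := by
        calc 2 * ((k : ℝ) + 1) ^ 2 * (Nat.choose (n - 1) k : ℝ)
            ≤ ρ * (n : ℝ) * (Nat.choose (n - 1) k : ℝ) :=
              mul_le_mul_of_nonneg_right hρn hcpos
          _ = ρ * ((n : ℝ) * (Nat.choose (n - 1) k : ℝ)) := by ring
          _ = ρ * (K * ((k : ℝ) + 1)) := by rw [hcast]
          _ = ρ * K * ((k : ℝ) + 1) := by ring
      have hk1pos : (0 : ℝ) < (k : ℝ) + 1 := by positivity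
      have h9 : (((k : ℝ) + 1) * (Nat.choose (n - 1) k : ℝ) * 2) * ((k : ℝ) + 1)
          ≤ (ρ * K) * ((k : ℝ) + 1) := by nlinarith [h8]
      have h10 := le_of_mul_le_mul_right h9 hk1pos
      linarith
    have hmK : ρ * K ≤ m := hlow
    have hKm2 : m ≤ (1 - ρ) * K := hupp
    have hperB2 : ∀ B ∈ notE, m / 2 ≤ ((E.filter (fun A => Disjoint A B)).card : ℝ) := by
      intro B hB
      have hsplit := card_filter_add_card_filter_not
        (s := E) (p := fun A => Disjoint A B)
      have h9 : ((E.filter (fun A => ¬ Disjoint A B)).card : ℝ)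
          ≤ ((k : ℝ) + 1) * (Nat.choose (n - 1) k : ℝ) := by
        exact_mod_cast hperB B hB
      have h10 := le_trans h9 hCbd
      have hsplit' : ((E.filter (fun A => Disjoint A B)).card : ℝ)
          + ((E.filter (fun A => ¬ Disjoint A B)).card : ℝ) = m := by
        rw [hmdef]; exact_mod_cast hsplit
      linarith
    have hnotEcard : (notE.card : ℝ) = K - m := by
      have h11 : notE.card = Nat.choose n (k + 1) - E.card := by
        rw [hnotEdef, card_sdiff_of_subset hEsub, card_powersetCard, card_univ, ← hndef]
      rw [h11, hKdef, hmdef, Nat.cast_sub hElecard]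
    have hPdreal : (K - m) * (m / 2) ≤ (Pd.card : ℝ) := by
      have h12 : (Pd.card : ℝ) = ∑ B ∈ notE, ((E.filter (fun A => Disjoint A B)).card : ℝ) := by
        rw [hPdsum]; exact Nat.cast_sum _ _
      rw [h12]
      calc (K - m) * (m / 2) = notE.card • (m / 2) := by rw [nsmul_eq_mul, hnotEcard]
        _ ≤ ∑ B ∈ notE, ((E.filter (fun A => Disjoint A B)).card : ℝ) :=
            card_nsmul_le_sum _ _ _ hperB2
    -- symmetric difference sum
    have hTriSum : Tri.card = ∑ p ∈ (univ : Finset V).offDiag,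
        (link E (k + 1) p.1 \ link E (k + 1) p.2).card := by
      rw [hTridef]; exact card_sigma _ _
    have hsymmsplit : ∀ p : V × V,
        (link E (k + 1) p.1 ∆ link E (k + 1) p.2).card
          = (link E (k + 1) p.1 \ link E (k + 1) p.2).card
            + (link E (k + 1) p.2 \ link E (k + 1) p.1).card := by
      intro p
      rw [symmDiff_def, sup_eq_union]
      exact card_union_of_disjoint disjoint_sdiff_sdiff
    have hswap : ∑ p ∈ (univ : Finset V).offDiag,
        (link E (k + 1) p.2 \ link E (k + 1) p.1).card
        = ∑ p ∈ (univ : Finset V).offDiag,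
        (link E (k + 1) p.1 \ link E (k + 1) p.2).card := by
      refine Finset.sum_equiv (Equiv.prodComm V V) ?_ ?_
      · intro p
        simp only [Finset.mem_offDiag, Equiv.prodComm_apply, Prod.fst_swap, Prod.snd_swap,
          mem_univ, true_and]
        exact ⟨Ne.symm, Ne.symm⟩
      · intro p hp; rfl
    have hsum2 : ∑ p ∈ (univ : Finset V).offDiag,
        (link E (k + 1) p.1 ∆ link E (k + 1) p.2).card = 2 * Tri.card := by
      calc ∑ p ∈ (univ : Finset V).offDiag,
          (link E (k + 1) p.1 ∆ link E (k + 1) p.2).card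
          = ∑ p ∈ (univ : Finset V).offDiag,
            ((link E (k + 1) p.1 \ link E (k + 1) p.2).card
              + (link E (k + 1) p.2 \ link E (k + 1) p.1).card) :=
            sum_congr rfl fun p _ => hsymmsplit p
        _ = (∑ p ∈ (univ : Finset V).offDiag,
              (link E (k + 1) p.1 \ link E (k + 1) p.2).card)
            + ∑ p ∈ (univ : Finset V).offDiag,
              (link E (k + 1) p.2 \ link E (k + 1) p.1).card := sum_add_distrib
        _ = 2 * Tri.card := by rw [hswap, hTriSum]; ring
    have h1n : 1 < Fintype.card V := by rw [← hndef]; omega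
    have hne : ((univ : Finset V).offDiag).Nonempty := by
      obtain ⟨v, v', hvv⟩ := Fintype.exists_pair_of_one_lt_card h1n
      exact ⟨(v, v'), Finset.mem_offDiag.2 ⟨mem_univ _, mem_univ _, hvv⟩⟩
    have hoffcard : (((univ : Finset V).offDiag).card : ℝ) = (n : ℝ) * n - n := by
      have hnn : n ≤ n * n := Nat.le_mul_of_pos_left n hnpos
      rw [Finset.offDiag_card, card_univ, ← hndef, Nat.cast_sub hnn]
      push_cast; ring
    -- upper bound from hcon
    have hUB : 2 * (Tri.card : ℝ) < ((n : ℝ) * n - n) * (ρ * (1 - ρ) * (n : ℝ) ^ k / F2) := by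
      have h15 : ∑ p ∈ (univ : Finset V).offDiag,
          ((link E (k + 1) p.1 ∆ link E (k + 1) p.2).card : ℝ)
          < ∑ _p ∈ (univ : Finset V).offDiag, (ρ * (1 - ρ) * (n : ℝ) ^ k / F2) :=
        sum_lt_sum_of_nonempty hne (fun p hp => hcon p.1 p.2 (Finset.mem_offDiag.1 hp).2.2)
      rw [sum_const, nsmul_eq_mul] at h15
      have h16 : (∑ p ∈ (univ : Finset V).offDiag,
          ((link E (k + 1) p.1 ∆ link E (k + 1) p.2).card : ℝ)) = 2 * (Tri.card : ℝ) := by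
        have h17 := congrArg (fun t : ℕ => (t : ℝ)) hsum2
        push_cast at h17
        exact h17
      rw [h16, hoffcard] at h15
      exact h15
    -- lower bound on Tri
    have hPT : (Pd.card : ℝ) * F1 ≤ (Tri.card : ℝ) * (n : ℝ) ^ k := by
      rw [hF1def]; exact_mod_cast hNat
    have hKmprod : ρ * (1 - ρ) * K ^ 2 ≤ (K - m) * m := by
      nlinarith [mul_nonneg (sub_nonneg.2 hmK) (sub_nonneg.2 hKm2)]
    have hTriLB : ρ * (1 - ρ) * K ^ 2 * F1 ≤ 2 * (Tri.card : ℝ) * (n : ℝ) ^ k := by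
      have h13 : (K - m) * (m / 2) * F1 ≤ (Tri.card : ℝ) * (n : ℝ) ^ k :=
        le_trans (mul_le_mul_of_nonneg_right hPdreal (le_of_lt hF1pos)) hPT
      have h14 := mul_le_mul_of_nonneg_right hKmprod hF1pos.le
      linarith
    -- numeric facts
    have hKF : ((n : ℝ) - k) ^ (k + 1) ≤ K * F1 := by
      have h2' : (n - k) ^ (k + 1) ≤ Nat.descFactorial n (k + 1) := by
        have h3' := Nat.pow_sub_le_descFactorial n (k + 1)
        have h4' : n + 1 - (k + 1) = n - k := by omega
        rwa [h4'] at h3'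
      have h5' : Nat.descFactorial n (k + 1) = Nat.factorial (k + 1) * Nat.choose n (k + 1) :=
        Nat.descFactorial_eq_factorial_mul_choose n (k + 1)
      have h6' : ((n - k : ℕ) : ℝ) = (n : ℝ) - k := by
        rw [Nat.cast_sub (by omega : k ≤ n)]
      calc ((n : ℝ) - k) ^ (k + 1) = (((n - k : ℕ) : ℝ)) ^ (k + 1) := by rw [h6']
        _ ≤ (Nat.descFactorial n (k + 1) : ℝ) := by exact_mod_cast h2'
        _ = K * F1 := by rw [h5', hKdef, hF1def]; push_cast; ring
    have hnkpos : (0 : ℝ) ≤ (n : ℝ) - k := by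
      have h18 : (k : ℝ) ≤ n := by exact_mod_cast (by omega : k ≤ n)
      linarith
    have hBern : (n : ℝ) ^ (2 * k + 2) ≤ ((k : ℝ) + 1 + 1) * ((n : ℝ) - k) ^ (2 * k + 2) := by
      have ht : (k : ℝ) / n ≤ 1 := by
        rw [div_le_one hnR]; exact_mod_cast (by omega : k ≤ n)
      have hber := one_add_mul_le_pow (a := -((k : ℝ) / n)) (by linarith) (2 * k + 2)
      have hfrac : ((2 * k + 2 : ℕ) : ℝ) * ((k : ℝ) / n) ≤ 1 / 2 := by
        have h17 : ((2 * (2 * k + 2) * k : ℕ) : ℝ) ≤ (n : ℝ) := by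
          exact_mod_cast (by omega : 2 * (2 * k + 2) * k ≤ n)
        push_cast at h17 ⊢
        rw [mul_div_assoc'] at *
        rw [div_le_div_iff₀ hnR (by norm_num : (0 : ℝ) < 2)]
        nlinarith
      have h19 : 1 / 2 ≤ (1 - (k : ℝ) / n) ^ (2 * k + 2) := by
        have e2 : (1 : ℝ) + ((2 * k + 2 : ℕ) : ℝ) * (-((k : ℝ) / n))
            = 1 - ((2 * k + 2 : ℕ) : ℝ) * ((k : ℝ) / n) := by ring
        have e3 : (1 : ℝ) + -((k : ℝ) / n) = 1 - (k : ℝ) / n := by ring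
        rw [e2, e3] at hber
        linarith
      have h20 : 1 - (k : ℝ) / n = ((n : ℝ) - k) / n := by field_simp
      rw [h20, div_pow, le_div_iff₀ (pow_pos hnR _)] at h19
      have hxpos : (0 : ℝ) ≤ ((n : ℝ) - k) ^ (2 * k + 2) := pow_nonneg hnkpos _
      have hknn : (0 : ℝ) ≤ (k : ℝ) := Nat.cast_nonneg k
      nlinarith [mul_nonneg hknn hxpos]
    -- final contradiction
    have hx0 : (0 : ℝ) < ρ * (1 - ρ) := by nlinarith
    have hstep1 : 2 * (Tri.card : ℝ) * (n : ℝ) ^ k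
        < ((n : ℝ) * n - n) * (ρ * (1 - ρ) * (n : ℝ) ^ k / F2) * (n : ℝ) ^ k :=
      mul_lt_mul_of_pos_right hUB hNk
    have hstep2 : ρ * (1 - ρ) * K ^ 2 * F1
        < ((n : ℝ) * n - n) * (ρ * (1 - ρ) * (n : ℝ) ^ k / F2) * (n : ℝ) ^ k :=
      lt_of_le_of_lt hTriLB hstep1
    have hstep3 : ρ * (1 - ρ) * (K ^ 2 * F1 * F2)
        < ρ * (1 - ρ) * (((n : ℝ) * n - n) * ((n : ℝ) ^ k) ^ 2) := by
      have e : ((n : ℝ) * n - n) * (ρ * (1 - ρ) * (n : ℝ) ^ k / F2) * (n : ℝ) ^ k * F2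
          = ρ * (1 - ρ) * (((n : ℝ) * n - n) * ((n : ℝ) ^ k) ^ 2) := by
        field_simp
      calc ρ * (1 - ρ) * (K ^ 2 * F1 * F2) = (ρ * (1 - ρ) * K ^ 2 * F1) * F2 := by ring
        _ < (((n : ℝ) * n - n) * (ρ * (1 - ρ) * (n : ℝ) ^ k / F2) * (n : ℝ) ^ k) * F2 :=
            mul_lt_mul_of_pos_right hstep2 hF2pos
        _ = _ := e
    have hstep4 : K ^ 2 * F1 * F2 < ((n : ℝ) * n - n) * ((n : ℝ) ^ k) ^ 2 :=
      lt_of_mul_lt_mul_left hstep3 hx0.le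
    have hKF0 : (0 : ℝ) ≤ ((n : ℝ) - k) ^ (k + 1) := pow_nonneg hnkpos _
    have hsq : ((n : ℝ) - k) ^ (2 * k + 2) ≤ (K * F1) ^ 2 := by
      have h21 := mul_self_le_mul_self hKF0 hKF
      calc ((n : ℝ) - k) ^ (2 * k + 2)
          = ((n : ℝ) - k) ^ (k + 1) * ((n : ℝ) - k) ^ (k + 1) := by ring
        _ ≤ (K * F1) * (K * F1) := h21
        _ = (K * F1) ^ 2 := by ring
    have hKform : K ^ 2 * F1 * F2 = (K * F1) ^ 2 * ((k : ℝ) + 1 + 1) := by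
      rw [hF21]; ring
    have hlhs : (n : ℝ) ^ (2 * k + 2) ≤ K ^ 2 * F1 * F2 := by
      rw [hKform]
      calc (n : ℝ) ^ (2 * k + 2) ≤ ((k : ℝ) + 1 + 1) * ((n : ℝ) - k) ^ (2 * k + 2) := hBern
        _ ≤ ((k : ℝ) + 1 + 1) * (K * F1) ^ 2 :=
            mul_le_mul_of_nonneg_left hsq (by positivity)
        _ = (K * F1) ^ 2 * ((k : ℝ) + 1 + 1) := by ring
    have hrhs : ((n : ℝ) * n - n) * ((n : ℝ) ^ k) ^ 2 ≤ (n : ℝ) ^ (2 * k + 2) := by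
      have e : (n : ℝ) ^ (2 * k + 2) = ((n : ℝ) * n) * ((n : ℝ) ^ k) ^ 2 := by ring
      rw [e]
      apply mul_le_mul_of_nonneg_right _ (by positivity)
      linarith
    linarith
end
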